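/- In the block construction, if additionally m · 2^{−s} ≤ 1/4, then the average overlap density of F satisfies 1/m ≤ AOD(F) ≤ 2/m + m²s/n. -/

import Mathlib

open Finset

/-- A family of finite sets is union-closed if it contains the union of any two of
its members. -/
def UnionClosed {α : Type*} [DecidableEq α] (F : Finset (Finset α)) : Prop :=
  ∀ A ∈ F, ∀ B ∈ F, A ∪ B ∈ F

/-- The abundance of `x` with respect to a family `F`. -/
noncomputable def abundance {α : Type*} [DecidableEq α] (F : Finset (Finset α)) (x : α) : ℝ :=
  ((F.filter (fun A => x ∈ A)).card : ℝ) / (F.card : ℝ)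

/-- The average overlap density of `F`. -/
noncomputable def AOD {α : Type*} [DecidableEq α] (F : Finset (Finset α)) : ℝ :=
  (1 / (((F.erase ∅).card : ℝ))) *
    ∑ A ∈ F.erase ∅, (1 / (A.card : ℝ)) * ∑ x ∈ A, abundance F x

/-- The union-closed family generated by `G = {B i ∪ {j} : i, j ∈ T}`:
all unions of nonempty subcollections of `G`. -/
def blockFamily {n m : ℕ} (B : Fin m → Finset (Fin n)) (T : Finset (Fin n)) :
    Finset (Finset (Fin n)) :=
  ((((univ : Finset (Fin m)) ×ˢ T).image (fun p => B p.1 ∪ {p.2})).powerset.filter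
      (fun C => C.Nonempty)).image (fun C => C.sup id)


section BlockAux
variable {k m s : ℕ}
variable (B T : Fin m → Finset (Fin (k * m)))

/-- all nonempty subsets of `Fin m` -/
def Pm (m : ℕ) : Finset (Finset (Fin m)) := univ.powerset.filter Finset.Nonempty

def Dst (S : Finset (Fin m)) : Finset (Fin (k * m)) :=
  (univ.biUnion T) \ S.biUnion B

def idx : Finset ((_ : Finset (Fin m)) × Finset (Fin (k * m))) :=
  (Pm m).sigma (fun S => (Dst B T S).powerset)

def Phi (p : (_ : Finset (Fin m)) × Finset (Fin (k * m))) : Finset (Fin (k * m)) :=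
  p.1.biUnion B ∪ p.2

lemma mem_idx {p : (_ : Finset (Fin m)) × Finset (Fin (k * m))} :
    p ∈ idx B T ↔ p.1.Nonempty ∧ p.2 ⊆ (univ.biUnion T) \ p.1.biUnion B := by
  cases p with
  | mk S J => simp [idx, Pm, Dst, Finset.mem_sigma, Finset.mem_filter]

variable (hT : ∀ i, T i ⊆ B i) (hTcard : ∀ i, (T i).card = s)
variable (hBdisj : ∀ i j : Fin m, i ≠ j → Disjoint (B i) (B j))

include hT hBdisj in
lemma mem_T_of_mem_Tf_block {x : Fin (k * m)} {i : Fin m}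
    (hx : x ∈ univ.biUnion T) (hxi : x ∈ B i) : x ∈ T i := by
  simp only [mem_biUnion, mem_univ, true_and] at hx
  obtain ⟨l, hl⟩ := hx
  rcases eq_or_ne l i with rfl | hne
  · exact hl
  · exact absurd (hT l hl) (Finset.disjoint_right.mp (hBdisj l i hne) hxi)

/-- membership in blockFamily: forward decomposition -/
lemma blockFamily_subset_image :
    blockFamily B (univ.biUnion T) ⊆ (idx B T).image (Phi B) := by
  intro A hA
  simp only [blockFamily, mem_image, mem_filter, mem_powerset] at hA
  obtain ⟨C, ⟨hCsub, hCne⟩, rfl⟩ := hA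
  classical
  set f : Fin m × Fin (k * m) → Finset (Fin (k * m)) := fun p => B p.1 ∪ {p.2} with hf
  set P : Finset (Fin m × Fin (k * m)) :=
    (univ ×ˢ (univ.biUnion T)).filter (fun p => f p ∈ C) with hP
  have hCP : C = P.image f := by
    apply Finset.Subset.antisymm
    · intro c hc
      obtain ⟨p, hp, rfl⟩ := Finset.mem_image.mp (hCsub hc)
      exact Finset.mem_image.mpr ⟨p, Finset.mem_filter.mpr ⟨hp, hc⟩, rfl⟩
    · intro c hc
      obtain ⟨p, hp, rfl⟩ := Finset.mem_image.mp hc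
      exact (Finset.mem_filter.mp hp).2
  have hPne : P.Nonempty := by
    obtain ⟨c, hc⟩ := hCne
    rw [hCP] at hc
    obtain ⟨p, hp, _⟩ := Finset.mem_image.mp hc
    exact ⟨p, hp⟩
  set S : Finset (Fin m) := P.image Prod.fst with hS
  set Jr : Finset (Fin (k * m)) := P.image Prod.snd with hJr
  have hsup : C.sup id = S.biUnion B ∪ Jr := by
    ext x
    simp only [hCP, Finset.sup_image, Function.comp, id, hf, Finset.mem_sup,
      Finset.mem_union, Finset.mem_biUnion, hS, hJr, Finset.mem_image,
      Finset.mem_singleton]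
    constructor
    · rintro ⟨p, hp, hx | hx⟩
      · exact Or.inl ⟨p.1, ⟨p, hp, rfl⟩, hx⟩
      · exact Or.inr ⟨p, hp, hx.symm⟩
    · rintro (⟨i, ⟨p, hp, rfl⟩, hx⟩ | ⟨p, hp, hx⟩)
      · exact ⟨p, hp, Or.inl hx⟩
      · exact ⟨p, hp, Or.inr hx.symm⟩
  refine Finset.mem_image.mpr ⟨⟨S, Jr \ S.biUnion B⟩, ?_, ?_⟩
  · rw [mem_idx]
    constructor
    · obtain ⟨p, hp⟩ := hPne
      exact ⟨p.1, Finset.mem_image.mpr ⟨p, hp, rfl⟩⟩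
    · intro x hx
      simp only [Finset.mem_sdiff] at hx ⊢
      refine ⟨?_, hx.2⟩
      obtain ⟨p, hp, rfl⟩ := Finset.mem_image.mp hx.1
      exact (Finset.mem_product.mp (Finset.mem_filter.mp hp).1).2
  · simp only [Phi]
    rw [hsup, Finset.union_sdiff_self_eq_union]

include hT hTcard in
lemma image_subset_blockFamily (hs : 0 < s) :
    (idx B T).image (Phi B) ⊆ blockFamily B (univ.biUnion T) := by
  classical
  intro A hA
  obtain ⟨⟨S, J⟩, hp, rfl⟩ := Finset.mem_image.mp hA
  rw [mem_idx] at hp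
  obtain ⟨⟨i0, hi0⟩, hJ⟩ := hp
  have hTi0 : (T i0).Nonempty := by rw [← Finset.card_pos, hTcard]; exact hs
  obtain ⟨j0, hj0⟩ := hTi0
  have hj0Tf : j0 ∈ univ.biUnion T := Finset.mem_biUnion.mpr ⟨i0, mem_univ _, hj0⟩
  set C : Finset (Finset (Fin (k * m))) :=
    (S.image (fun i => B i ∪ {j0})) ∪ (J.image (fun j => B i0 ∪ {j})) with hC
  simp only [blockFamily, mem_image, mem_filter, mem_powerset]
  refine ⟨C, ⟨?_, ?_⟩, ?_⟩
  · intro c hc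
    rw [hC, Finset.mem_union] at hc
    rcases hc with hc | hc
    · obtain ⟨i, _, rfl⟩ := Finset.mem_image.mp hc
      exact Finset.mem_image.mpr ⟨(i, j0), Finset.mem_product.mpr ⟨mem_univ _, hj0Tf⟩, rfl⟩
    · obtain ⟨j, hjJ, rfl⟩ := Finset.mem_image.mp hc
      have : j ∈ univ.biUnion T := (Finset.mem_sdiff.mp (hJ hjJ)).1
      exact Finset.mem_image.mpr ⟨(i0, j), Finset.mem_product.mpr ⟨mem_univ _, this⟩, rfl⟩
  · exact ⟨B i0 ∪ {j0}, by rw [hC, Finset.mem_union]; exact Or.inl (Finset.mem_image.mpr ⟨i0, hi0, rfl⟩)⟩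
  · ext x
    simp only [Finset.mem_sup, hC, Finset.mem_union, Finset.mem_image, id, Phi,
      Finset.mem_biUnion, Finset.mem_singleton]
    constructor
    · rintro ⟨c, hc | hc, hxc⟩
      · obtain ⟨i, hiS, rfl⟩ := hc
        rcases Finset.mem_union.mp hxc with hx | hx
        · exact Or.inl ⟨i, hiS, hx⟩
        · rw [Finset.mem_singleton] at hx; subst hx
          exact Or.inl ⟨i0, hi0, hT i0 hj0⟩
      · obtain ⟨j, hjJ, rfl⟩ := hc
        rcases Finset.mem_union.mp hxc with hx | hx
        · exact Or.inl ⟨i0, hi0, hx⟩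
        · rw [Finset.mem_singleton] at hx; subst hx; exact Or.inr hjJ
    · rintro (⟨i, hiS, hx⟩ | hx)
      · exact ⟨B i ∪ {j0}, Or.inl ⟨i, hiS, rfl⟩, Finset.mem_union_left _ hx⟩
      · exact ⟨B i0 ∪ {x}, Or.inr ⟨x, hx, rfl⟩, Finset.mem_union_right _ (Finset.mem_singleton_self x)⟩

end BlockAux
section BlockAux2
variable {k m s : ℕ}
variable (B T : Fin m → Finset (Fin (k * m)))
variable (hT : ∀ i, T i ⊆ B i) (hTcard : ∀ i, (T i).card = s)
variable (hBdisj : ∀ i j : Fin m, i ≠ j → Disjoint (B i) (B j))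
variable (hBcard : ∀ i, (B i).card = k)

include hT hTcard hBdisj hBcard in
lemma injOn_Phi (hsk : s + 2 ≤ k) : Set.InjOn (Phi B) ↑(idx B T) := by
  classical
  have key : ∀ p ∈ idx B T, ∀ i, i ∈ p.1 ↔ B i ⊆ Phi B p := by
    rintro ⟨S, J⟩ hp i
    rw [mem_idx] at hp
    constructor
    · intro hi x hx
      exact Finset.mem_union_left _ (Finset.mem_biUnion.mpr ⟨i, hi, hx⟩)
    · intro hBi
      by_contra hiS
      have hsub : B i ⊆ T i := by
        intro x hx
        rcases Finset.mem_union.mp (hBi hx) with hx' | hx'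
        · obtain ⟨l, hlS, hxl⟩ := Finset.mem_biUnion.mp hx'
          have : l ≠ i := fun h => hiS (h ▸ hlS)
          exact absurd hx (Finset.disjoint_left.mp (hBdisj l i this) hxl)
        · have hxTf : x ∈ univ.biUnion T := (Finset.mem_sdiff.mp (hp.2 hx')).1
          exact mem_T_of_mem_Tf_block B T hT hBdisj hxTf hx
      have := Finset.card_le_card hsub
      rw [hBcard i, hTcard i] at this
      omega
  rintro ⟨S, J⟩ hp ⟨S', J'⟩ hq heq
  simp only [Finset.coe_sigma, Set.mem_setOf_eq, Finset.mem_coe] at hp hq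
  have hp' := hp; have hq' := hq
  have hS : S = S' := by
    ext i
    rw [key ⟨S, J⟩ hp i, key ⟨S', J'⟩ hq i, heq]
  subst hS
  have hJd : Disjoint J (S.biUnion B) := by
    rw [mem_idx] at hp
    exact Finset.disjoint_left.mpr (fun x hx => (Finset.mem_sdiff.mp (hp.2 hx)).2)
  have hJd' : Disjoint J' (S.biUnion B) := by
    rw [mem_idx] at hq
    exact Finset.disjoint_left.mpr (fun x hx => (Finset.mem_sdiff.mp (hq.2 hx)).2)
  have hJ : J = J' := by
    have h1 : (S.biUnion B ∪ J) \ S.biUnion B = J :=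
      Finset.union_sdiff_cancel_left hJd.symm
    have h2 : (S.biUnion B ∪ J') \ S.biUnion B = J' :=
      Finset.union_sdiff_cancel_left hJd'.symm
    rw [← h1, ← h2]
    simp only [Phi] at heq
    rw [heq]
  rw [hJ]

include hT hBdisj in
lemma Dst_eq (S : Finset (Fin m)) : Dst B T S = (univ \ S).biUnion T := by
  ext x
  simp only [Dst, Finset.mem_sdiff, Finset.mem_biUnion, Finset.mem_univ, true_and]
  constructor
  · rintro ⟨⟨l, hl⟩, hnot⟩
    refine ⟨l, ?_, hl⟩
    intro hlS
    exact hnot ⟨l, hlS, hT l hl⟩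
  · rintro ⟨l, hlS, hl⟩
    refine ⟨⟨l, hl⟩, ?_⟩
    rintro ⟨i, hiS, hxi⟩
    have : i ≠ l := fun h => hlS (h ▸ hiS)
    exact absurd hxi (Finset.disjoint_right.mp (hBdisj i l this) (hT l hl))

include hT hTcard hBdisj in
lemma Dst_card (S : Finset (Fin m)) : (Dst B T S).card = s * (m - S.card) := by
  rw [Dst_eq B T hT hBdisj]
  rw [Finset.card_biUnion]
  · rw [Finset.sum_congr rfl (fun i _ => hTcard i), Finset.sum_const, smul_eq_mul,
      Finset.card_sdiff_of_subset (Finset.subset_univ S), Finset.card_univ, Fintype.card_fin,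
      mul_comm]
  · intro i hi j hj hij
    exact (hBdisj i j hij).mono (hT i) (hT j)

include hT hTcard hBdisj in
lemma sum_idx (g : Finset (Fin m) → ℕ) :
    ∑ p ∈ idx B T, g p.1 = ∑ S ∈ Pm m, 2 ^ (s * (m - S.card)) * g S := by
  rw [idx, Finset.sum_sigma]
  refine Finset.sum_congr rfl (fun S _ => ?_)
  have h1 : ∀ J ∈ (Dst B T S).powerset,
      g (⟨S, J⟩ : Σ _ : Finset (Fin m), Finset (Fin (k * m))).1 = g S := fun _ _ => rfl
  rw [Finset.sum_congr rfl h1, Finset.sum_const, Finset.card_powerset,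
    Dst_card B T hT hTcard hBdisj, smul_eq_mul]

end BlockAux2
section BlockAux3

def wgt (s : ℕ) {m : ℕ} (S : Finset (Fin m)) : ℕ := 2 ^ (s * (m - S.card))

def Msum (s : ℕ) {m : ℕ} (i : Fin m) : ℕ :=
  ∑ S ∈ (Pm m).filter (fun S => i ∈ S), wgt s S

def Nsum (s m : ℕ) : ℕ := ∑ S ∈ Pm m, wgt s S

variable {m s : ℕ}

lemma Msum_symm (i j : Fin m) : Msum s i = Msum s j := by
  classical
  refine Finset.sum_nbij' (fun S => S.image (Equiv.swap i j))
    (fun S => S.image (Equiv.swap i j)) ?_ ?_ ?_ ?_ ?_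
  · intro S hS
    simp only [Finset.mem_filter, Pm, Finset.mem_powerset] at hS ⊢
    refine ⟨⟨Finset.subset_univ _, hS.1.2.image _⟩, ?_⟩
    have : (Equiv.swap i j) i = j := Equiv.swap_apply_left i j
    exact Finset.mem_image.mpr ⟨i, hS.2, this⟩
  · intro S hS
    simp only [Finset.mem_filter, Pm, Finset.mem_powerset] at hS ⊢
    refine ⟨⟨Finset.subset_univ _, hS.1.2.image _⟩, ?_⟩
    have : (Equiv.swap i j) j = i := Equiv.swap_apply_right i j
    exact Finset.mem_image.mpr ⟨j, hS.2, this⟩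
  · intro S _
    show (S.image (Equiv.swap i j)).image (Equiv.swap i j) = S
    rw [Finset.image_image]
    have : (Equiv.swap i j : Fin m → Fin m) ∘ (Equiv.swap i j) = id := by
      funext x; simp
    rw [this, Finset.image_id]
  · intro S _
    show (S.image (Equiv.swap i j)).image (Equiv.swap i j) = S
    rw [Finset.image_image]
    have : (Equiv.swap i j : Fin m → Fin m) ∘ (Equiv.swap i j) = id := by
      funext x; simp
    rw [this, Finset.image_id]
  · intro S _
    simp only [wgt]
    rw [Finset.card_image_of_injective _ (Equiv.injective _)]

lemma sum_card_wgt : ∑ S ∈ Pm m, S.card * wgt s S = ∑ i : Fin m, Msum s i := by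
  classical
  have h1 : ∀ S ∈ Pm m, S.card * wgt s S = ∑ i : Fin m, if i ∈ S then wgt s S else 0 := by
    intro S _
    rw [Finset.sum_ite_mem, Finset.univ_inter, Finset.sum_const, smul_eq_mul]
  rw [Finset.sum_congr rfl h1, Finset.sum_comm]
  refine Finset.sum_congr rfl (fun i _ => ?_)
  rw [Msum, Finset.sum_filter]

lemma Nsum_le (i : Fin m) : Nsum s m ≤ m * Msum s i := by
  have h1 : Nsum s m ≤ ∑ S ∈ Pm m, S.card * wgt s S := by
    refine Finset.sum_le_sum (fun S hS => ?_)
    have : 1 ≤ S.card := by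
      simp only [Pm, Finset.mem_filter] at hS
      exact Finset.card_pos.mpr hS.2
    calc wgt s S = 1 * wgt s S := (one_mul _).symm
    _ ≤ S.card * wgt s S := Nat.mul_le_mul_right _ this
  rw [sum_card_wgt] at h1
  calc Nsum s m ≤ ∑ j : Fin m, Msum s j := h1
  _ = ∑ _j : Fin m, Msum s i := Finset.sum_congr rfl (fun j _ => Msum_symm j i)
  _ = m * Msum s i := by rw [Finset.sum_const, Finset.card_univ, Fintype.card_fin, smul_eq_mul]

lemma Nsum_pos (hm : 0 < m) : 0 < Nsum s m := by
  have h0 : ({(⟨0, hm⟩ : Fin m)} : Finset (Fin m)) ∈ Pm m := by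
    simp [Pm]
  refine Finset.sum_pos' (fun S _ => Nat.zero_le _) ⟨_, h0, ?_⟩
  exact Nat.pow_pos (by norm_num)

lemma Msum_le (hm : 2 ≤ m) (hy : 4 * m ≤ 2 ^ s) (i : Fin m) :
    m * Msum s i ≤ 2 * Nsum s m := by
  classical
  set y := 2 ^ s with hy'
  -- split N = M + (sum over S not containing i)
  have hsplit : Nsum s m
      = Msum s i + ∑ S ∈ (Pm m).filter (fun S => i ∉ S), wgt s S := by
    rw [Nsum, Msum, Finset.sum_filter_add_sum_filter_not]
  -- a := sum over S containing i with S ≠ {i}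
  set a := ∑ S ∈ (Pm m).filter (fun S => i ∈ S ∧ S ≠ {i}), wgt s S with ha'
  have hMsplit : Msum s i = 2 ^ (s * (m - 1)) + a := by
    rw [Msum]
    have : (Pm m).filter (fun S => i ∈ S)
        = ((Pm m).filter (fun S => i ∈ S)).filter (fun S => S = {i})
          ∪ ((Pm m).filter (fun S => i ∈ S)).filter (fun S => ¬ S = {i}) := by
      rw [Finset.filter_union_filter_not_eq]
    rw [← Finset.sum_filter_add_sum_filter_not ((Pm m).filter (fun S => i ∈ S))
      (fun S => S = {i})]
    congr 1
    · have h1 : ((Pm m).filter (fun S => i ∈ S)).filter (fun S => S = {i}) = {({i} : Finset (Fin m))} := by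
        ext S
        simp only [Finset.mem_filter, Finset.mem_singleton, Pm, Finset.mem_powerset]
        constructor
        · rintro ⟨-, h⟩; exact h
        · rintro rfl
          exact ⟨⟨⟨Finset.subset_univ _, Finset.singleton_nonempty i⟩, Finset.mem_singleton_self i⟩, rfl⟩
      rw [h1, Finset.sum_singleton, wgt, Finset.card_singleton]
    · rw [ha']
      congr 1
      rw [Finset.filter_filter]
  -- the sum over S not containing i equals y * a
  have hbij : ∑ S ∈ (Pm m).filter (fun S => i ∉ S), wgt s S = y * a := by
    rw [ha', Finset.mul_sum]
    refine Finset.sum_nbij' (fun S => insert i S) (fun S => S.erase i) ?_ ?_ ?_ ?_ ?_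
    · intro S hS
      simp only [Finset.mem_filter, Pm, Finset.mem_powerset] at hS ⊢
      refine ⟨⟨Finset.subset_univ _, Finset.insert_nonempty _ _⟩, Finset.mem_insert_self _ _, ?_⟩
      intro h
      obtain ⟨x, hx⟩ := hS.1.2
      have : x ∈ ({i} : Finset (Fin m)) := h ▸ Finset.mem_insert_of_mem hx
      rw [Finset.mem_singleton] at this
      exact hS.2 (this ▸ hx)
    · intro S hS
      simp only [Finset.mem_filter, Pm, Finset.mem_powerset] at hS ⊢
      refine ⟨⟨Finset.subset_univ _, ?_⟩, Finset.notMem_erase _ _⟩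
      rw [Finset.nonempty_iff_ne_empty]
      intro h
      have : S ⊆ {i} := by
        intro x hx
        rcases eq_or_ne x i with rfl | hne
        · exact Finset.mem_singleton_self _
        · exact absurd (Finset.mem_erase.mpr ⟨hne, hx⟩) (by rw [h]; exact Finset.notMem_empty x)
      rcases Finset.subset_singleton_iff.mp this with h' | h'
      · exact (hS.1.2.ne_empty) h'
      · exact hS.2.2 h'
    · intro S hS
      simp only [Finset.mem_filter] at hS
      show (insert i S).erase i = S
      rw [Finset.erase_insert hS.2]
    · intro S hS
      simp only [Finset.mem_filter] at hS
      show insert i (S.erase i) = S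
      rw [Finset.insert_erase hS.2.1]
    · intro S hS
      simp only [Finset.mem_filter, Pm, Finset.mem_powerset] at hS
      have hcard : (insert i S).card = S.card + 1 := Finset.card_insert_of_notMem hS.2
      have hlt : S.card < m := by
        have hne : S ≠ (Finset.univ : Finset (Fin m)) := fun h => hS.2 (h ▸ Finset.mem_univ i)
        have h2 := Finset.card_lt_card (Finset.ssubset_univ_iff.mpr hne)
        rwa [Finset.card_univ, Fintype.card_fin] at h2
      simp only [wgt, hcard, hy']
      rw [← pow_add]
      congr 1
      have : m - S.card = (m - (S.card + 1)) + 1 := by omega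
      rw [this]
      ring
  -- a ≥ (m-1) * 2^(s*(m-2))
  have halb : (m - 1) * 2 ^ (s * (m - 2)) ≤ a := by
    rw [ha']
    have hsub : (Finset.univ.erase i).image (fun j => ({i, j} : Finset (Fin m)))
        ⊆ (Pm m).filter (fun S => i ∈ S ∧ S ≠ {i}) := by
      intro S hS
      obtain ⟨j, hj, rfl⟩ := Finset.mem_image.mp hS
      have hji : j ≠ i := Finset.ne_of_mem_erase hj
      simp only [Finset.mem_filter, Pm, Finset.mem_powerset]
      refine ⟨⟨Finset.subset_univ _, Finset.insert_nonempty _ _⟩, Finset.mem_insert_self _ _, ?_⟩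
      intro h
      have : j ∈ ({i} : Finset (Fin m)) := h ▸ Finset.mem_insert_of_mem (Finset.mem_singleton_self j)
      exact hji (Finset.mem_singleton.mp this)
    calc (m - 1) * 2 ^ (s * (m - 2))
        = ∑ S ∈ (Finset.univ.erase i).image (fun j => ({i, j} : Finset (Fin m))), wgt s S := by
          rw [Finset.sum_image ?inj]
          case inj =>
            intro x hx y hy hxy
            have hxi : x ≠ i := Finset.ne_of_mem_erase hx
            have : x ∈ ({i, y} : Finset (Fin m)) := (show ({i, x} : Finset (Fin m)) = {i, y} from hxy) ▸ Finset.mem_insert_of_mem (Finset.mem_singleton_self x)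
            rcases Finset.mem_insert.mp this with h | h
            · exact absurd h hxi
            · exact Finset.mem_singleton.mp h
          have hval : ∀ j ∈ Finset.univ.erase i, wgt s ({i, j} : Finset (Fin m)) = 2 ^ (s * (m - 2)) := by
            intro j hj
            have : ({i, j} : Finset (Fin m)).card = 2 := by
              rw [Finset.card_insert_of_notMem, Finset.card_singleton]
              rw [Finset.mem_singleton]
              exact fun h => (Finset.ne_of_mem_erase hj) h.symm
            rw [wgt, this]
          rw [Finset.sum_congr rfl hval, Finset.sum_const, smul_eq_mul,
            Finset.card_erase_of_mem (Finset.mem_univ i), Finset.card_univ, Fintype.card_fin]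
      _ ≤ _ := Finset.sum_le_sum_of_subset hsub
  -- assemble
  have hw12 : (2:ℕ) ^ (s * (m - 1)) = y * 2 ^ (s * (m - 2)) := by
    rw [hy', ← pow_add]
    congr 1
    have : m - 1 = (m - 2) + 1 := by omega
    rw [this]; ring
  obtain ⟨m', rfl⟩ : ∃ m', m = m' + 2 := ⟨m - 2, by omega⟩
  set w2 := 2 ^ (s * (m' + 2 - 2)) with hw2'
  rw [hsplit, hbij, hMsplit, hw12]
  have h1 : m' * (y * w2) ≤ y * a := by
    calc m' * (y * w2) = y * (m' * w2) := by ring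
    _ ≤ y * ((m' + 1) * w2) :=
      Nat.mul_le_mul_left _ (Nat.mul_le_mul_right _ (by omega))
    _ ≤ y * a := Nat.mul_le_mul_left _ (by simpa using halb)
  have h2 : m' * a ≤ y * a := Nat.mul_le_mul_right _ (by omega)
  nlinarith [h1, h2]

end BlockAux3
section BlockAux4
variable {k m s : ℕ}
variable (B T : Fin m → Finset (Fin (k * m)))
variable (hT : ∀ i, T i ⊆ B i) (hTcard : ∀ i, (T i).card = s)
variable (hBdisj : ∀ i j : Fin m, i ≠ j → Disjoint (B i) (B j))
variable (hBcard : ∀ i, (B i).card = k)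

include hT hTcard hBdisj in
lemma card_idx : (idx B T).card = Nsum s m := by
  classical
  rw [Finset.card_eq_sum_ones]
  have h := sum_idx B T hT hTcard hBdisj (fun _ => 1)
  refine h.trans ?_
  rw [Nsum]
  exact Finset.sum_congr rfl (fun S _ => by rw [mul_one, wgt])

include hT hTcard hBdisj in
lemma filter_blk_card (i : Fin m) :
    ((idx B T).filter (fun p => i ∈ p.1)).card = Msum s i := by
  classical
  rw [Finset.card_filter]
  have h := sum_idx B T hT hTcard hBdisj (fun S => if i ∈ S then 1 else 0)
  refine h.trans ?_
  rw [Msum, Finset.sum_filter]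
  refine Finset.sum_congr rfl (fun S _ => ?_)
  split <;> simp [wgt]

include hT hTcard in
lemma family_eq (hs : 0 < s) :
    blockFamily B (univ.biUnion T) = (idx B T).image (Phi B) :=
  Finset.Subset.antisymm (blockFamily_subset_image B T)
    (image_subset_blockFamily B T hT hTcard hs)

include hT hTcard hBdisj hBcard in
lemma filter_card_eq (hs : 0 < s) (hsk : s + 2 ≤ k)
    (q : Finset (Fin (k * m)) → Prop) [DecidablePred q] :
    ((blockFamily B (univ.biUnion T)).filter q).card
      = ((idx B T).filter (fun p => q (Phi B p))).card := by
  classical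
  rw [family_eq B T hT hTcard hs, Finset.filter_image]
  exact Finset.card_image_of_injOn
    ((injOn_Phi B T hT hTcard hBdisj hBcard hsk).mono
      (Finset.coe_subset.mpr (Finset.filter_subset _ _)))

end BlockAux4

theorem blockFamily_AOD_bounds'
    (k m s : ℕ) (hk : 0 < k) (hm : 2 ≤ m) (hs : 0 < s) (hsk : s + 2 ≤ k)
    (B : Fin m → Finset (Fin (k * m)))
    (hBcard : ∀ i, (B i).card = k)
    (hBdisj : ∀ i j : Fin m, i ≠ j → Disjoint (B i) (B j))
    (hBcover : (Finset.univ : Finset (Fin m)).biUnion B = (Finset.univ : Finset (Fin (k * m))))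
    (T : Fin m → Finset (Fin (k * m)))
    (hT : ∀ i, T i ⊆ B i) (hTcard : ∀ i, (T i).card = s)
    (hτ : (m : ℝ) * (2 : ℝ) ^ (-(s : ℤ)) ≤ 1 / 4) :
    1 / (m : ℝ) ≤ AOD (blockFamily B ((univ : Finset (Fin m)).biUnion T)) ∧
    AOD (blockFamily B ((univ : Finset (Fin m)).biUnion T))
      ≤ 2 / (m : ℝ) + (m : ℝ) ^ 2 * (s : ℝ) / ((k * m : ℕ) : ℝ) := by
  classical
  have hmpos : 0 < m := by omega
  have hmR : (0:ℝ) < m := by exact_mod_cast hmpos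
  have hkR : (0:ℝ) < k := by exact_mod_cast hk
  -- 4m ≤ 2^s
  have hy : 4 * m ≤ 2 ^ s := by
    have h2s : (0:ℝ) < (2:ℝ) ^ s := by positivity
    have hpz : (2:ℝ) ^ (-(s:ℤ)) = ((2:ℝ) ^ s)⁻¹ := by
      rw [zpow_neg, zpow_natCast]
    rw [hpz] at hτ
    have h1 : (m:ℝ) * ((2:ℝ)^s)⁻¹ * (2^s) ≤ (1/4) * 2^s :=
      mul_le_mul_of_nonneg_right hτ h2s.le
    rw [mul_assoc, inv_mul_cancel₀ h2s.ne', mul_one] at h1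
    have h4 : (4:ℝ) * m ≤ (2:ℝ) ^ s := by linarith
    exact_mod_cast h4
  set F := blockFamily B ((univ : Finset (Fin m)).biUnion T) with hF
  -- block assignment
  have hcov : ∀ x : Fin (k*m), ∃ i, x ∈ B i := by
    intro x
    have hx : x ∈ (univ : Finset (Fin m)).biUnion B := by
      rw [hBcover]; exact Finset.mem_univ x
    obtain ⟨i, -, h⟩ := Finset.mem_biUnion.mp hx
    exact ⟨i, h⟩
  choose blk hblk using hcov
  have huniq : ∀ (x : Fin (k*m)) (l : Fin m), x ∈ B l → l = blk x := by
    intro x l h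
    by_contra hne
    exact (Finset.disjoint_left.mp (hBdisj l (blk x) hne) h) (hblk x)
  have hFeq : F = (idx B T).image (Phi B) := family_eq B T hT hTcard hs
  have hInj := injOn_Phi B T hT hTcard hBdisj hBcard hsk
  have hFcard : F.card = Nsum s m := by
    rw [hFeq, Finset.card_image_of_injOn hInj, card_idx B T hT hTcard hBdisj]
  have hNpos : 0 < Nsum s m := Nsum_pos hmpos
  have hNR : (0:ℝ) < Nsum s m := by exact_mod_cast hNpos
  have hAcard : ∀ A ∈ F, k ≤ A.card := by
    intro A hA
    rw [hFeq] at hA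
    obtain ⟨p, hp, rfl⟩ := Finset.mem_image.mp hA
    rw [mem_idx] at hp
    obtain ⟨⟨i0, hi0⟩, -⟩ := hp
    have hsub : B i0 ⊆ Phi B p := fun x hx =>
      Finset.mem_union_left _ (Finset.mem_biUnion.mpr ⟨i0, hi0, hx⟩)
    calc k = (B i0).card := (hBcard i0).symm
    _ ≤ _ := Finset.card_le_card hsub
  have herase : F.erase ∅ = F := by
    apply Finset.erase_eq_of_notMem
    intro h0
    have := hAcard ∅ h0
    simp only [Finset.card_empty] at this
    omega
  have hcount : ∀ x : Fin (k*m), (F.filter (fun A => x ∈ A)).card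
      = ((idx B T).filter (fun p => x ∈ Phi B p)).card := fun x =>
    filter_card_eq B T hT hTcard hBdisj hBcard hs hsk (fun A => x ∈ A)
  -- abundance lower bound
  have hlowN : ∀ x : Fin (k*m), Nsum s m ≤ m * (F.filter (fun A => x ∈ A)).card := by
    intro x
    rw [hcount x]
    have hsub : (idx B T).filter (fun p => blk x ∈ p.1)
        ⊆ (idx B T).filter (fun p => x ∈ Phi B p) := by
      intro p hp
      rw [Finset.mem_filter] at hp ⊢
      exact ⟨hp.1, Finset.mem_union_left _ (Finset.mem_biUnion.mpr ⟨blk x, hp.2, hblk x⟩)⟩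
    calc Nsum s m ≤ m * Msum s (blk x) := Nsum_le (blk x)
    _ = m * ((idx B T).filter (fun p => blk x ∈ p.1)).card := by
        rw [filter_blk_card B T hT hTcard hBdisj (blk x)]
    _ ≤ _ := Nat.mul_le_mul_left _ (Finset.card_le_card hsub)
  have habund_low : ∀ x, 1 / (m:ℝ) ≤ abundance F x := by
    intro x
    rw [abundance, hFcard]
    rw [div_le_div_iff₀ hmR hNR]
    have h := hlowN x
    calc (1:ℝ) * Nsum s m = Nsum s m := one_mul _
    _ ≤ (m:ℝ) * (F.filter (fun A => x ∈ A)).card := by exact_mod_cast h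
    _ = ((F.filter fun A => x ∈ A).card : ℝ) * m := mul_comm _ _
  -- abundance upper bound
  have habund_up : ∀ x, abundance F x
      ≤ 2/(m:ℝ) + (if x ∈ (univ : Finset (Fin m)).biUnion T then (1:ℝ) else 0) := by
    intro x
    by_cases hx : x ∈ (univ : Finset (Fin m)).biUnion T
    · simp only [hx, if_true]
      have h1 : abundance F x ≤ 1 := by
        rw [abundance, hFcard]
        apply div_le_one_of_le₀
        · have := Finset.card_le_card (Finset.filter_subset (fun A => x ∈ A) F)
          rw [hFcard] at this
          exact_mod_cast this
        · positivity
      have h2 : (0:ℝ) ≤ 2/m := by positivity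
      linarith
    · simp only [hx, if_false, add_zero]
      have hequal : (idx B T).filter (fun p => x ∈ Phi B p)
          = (idx B T).filter (fun p => blk x ∈ p.1) := by
        apply Finset.filter_congr
        intro p hp
        rw [mem_idx] at hp
        constructor
        · intro hxp
          rcases Finset.mem_union.mp hxp with h | h
          · obtain ⟨l, hlS, hxl⟩ := Finset.mem_biUnion.mp h
            rw [← huniq x l hxl]; exact hlS
          · exact absurd ((Finset.mem_sdiff.mp (hp.2 h)).1) hx
        · intro hblkx
          exact Finset.mem_union_left _ (Finset.mem_biUnion.mpr ⟨blk x, hblkx, hblk x⟩)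
      rw [abundance, hFcard, hcount x, hequal, filter_blk_card B T hT hTcard hBdisj (blk x)]
      rw [div_le_div_iff₀ hNR hmR]
      have h := Msum_le hm hy (blk x)
      calc (Msum s (blk x) : ℝ) * m = (m:ℝ) * Msum s (blk x) := mul_comm _ _
      _ ≤ 2 * Nsum s m := by exact_mod_cast h
      _ = 2 * (Nsum s m : ℝ) := rfl
  -- Tf cardinality
  have hTfcard : ((univ : Finset (Fin m)).biUnion T).card = m * s := by
    rw [Finset.card_biUnion (fun i _ j _ hij => (hBdisj i j hij).mono (hT i) (hT j))]
    rw [Finset.sum_congr rfl (fun i _ => hTcard i), Finset.sum_const, smul_eq_mul,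
      Finset.card_univ, Fintype.card_fin]
  -- per-set bounds
  have htlow : ∀ A ∈ F, 1/(m:ℝ) ≤ (1/(A.card:ℝ)) * ∑ x ∈ A, abundance F x := by
    intro A hA
    have hk' := hAcard A hA
    have hApos : (0:ℝ) < A.card := by
      have : 0 < A.card := lt_of_lt_of_le hk hk'
      exact_mod_cast this
    have hsum : (A.card:ℝ) * (1/m) ≤ ∑ x ∈ A, abundance F x := by
      calc (A.card:ℝ) * (1/m) = ∑ _x ∈ A, 1/(m:ℝ) := by
            rw [Finset.sum_const, nsmul_eq_mul]
      _ ≤ _ := Finset.sum_le_sum (fun x _ => habund_low x)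
    have h2 := mul_le_mul_of_nonneg_left hsum (le_of_lt (one_div_pos.mpr hApos))
    calc 1/(m:ℝ) = (1/(A.card:ℝ)) * ((A.card:ℝ) * (1/m)) := by field_simp
    _ ≤ _ := h2
  have htup : ∀ A ∈ F, (1/(A.card:ℝ)) * ∑ x ∈ A, abundance F x
      ≤ 2/(m:ℝ) + ((m:ℝ)*s)/k := by
    intro A hA
    have hk' := hAcard A hA
    have hApos : (0:ℝ) < A.card := by
      have : 0 < A.card := lt_of_lt_of_le hk hk'
      exact_mod_cast this
    have hChi : ∑ x ∈ A, (if x ∈ (univ : Finset (Fin m)).biUnion T then (1:ℝ) else 0)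
        ≤ (m:ℝ)*s := by
      rw [Finset.sum_boole]
      have hsub : A.filter (fun x => x ∈ (univ : Finset (Fin m)).biUnion T)
          ⊆ (univ : Finset (Fin m)).biUnion T := fun x hxm => (Finset.mem_filter.mp hxm).2
      have h3 := Finset.card_le_card hsub
      rw [hTfcard] at h3
      exact_mod_cast h3
    have hsum : ∑ x ∈ A, abundance F x ≤ (A.card:ℝ) * (2/m) + (m:ℝ)*s := by
      calc ∑ x ∈ A, abundance F x
          ≤ ∑ x ∈ A, (2/(m:ℝ) + (if x ∈ (univ : Finset (Fin m)).biUnion T then (1:ℝ) else 0)) :=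
            Finset.sum_le_sum (fun x _ => habund_up x)
      _ = (A.card:ℝ) * (2/m) + ∑ x ∈ A, (if x ∈ (univ : Finset (Fin m)).biUnion T then (1:ℝ) else 0) := by
            rw [Finset.sum_add_distrib, Finset.sum_const, nsmul_eq_mul]
      _ ≤ _ := by linarith
    calc (1/(A.card:ℝ)) * ∑ x ∈ A, abundance F x
        ≤ (1/(A.card:ℝ)) * ((A.card:ℝ) * (2/m) + (m:ℝ)*s) :=
          mul_le_mul_of_nonneg_left hsum (by positivity)
    _ = 2/(m:ℝ) + ((m:ℝ)*s)/(A.card:ℝ) := by field_simp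
    _ ≤ 2/(m:ℝ) + ((m:ℝ)*s)/k := by
        have h4 : ((m:ℝ)*s)/(A.card:ℝ) ≤ ((m:ℝ)*s)/k := by
          apply div_le_div_of_nonneg_left (by positivity) hkR
          exact_mod_cast hk'
        linarith
  have hAODeq : AOD F = (1/(Nsum s m : ℝ)) *
      ∑ A ∈ F, (1/(A.card:ℝ)) * ∑ x ∈ A, abundance F x := by
    rw [AOD, herase, hFcard]
  constructor
  · rw [hAODeq]
    have hsum : (Nsum s m : ℝ) * (1/m)
        ≤ ∑ A ∈ F, (1/(A.card:ℝ)) * ∑ x ∈ A, abundance F x := by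
      calc (Nsum s m : ℝ) * (1/m) = ∑ _A ∈ F, 1/(m:ℝ) := by
            rw [Finset.sum_const, nsmul_eq_mul, hFcard]
      _ ≤ _ := Finset.sum_le_sum htlow
    calc 1/(m:ℝ) = (1/(Nsum s m : ℝ)) * ((Nsum s m : ℝ) * (1/m)) := by field_simp
    _ ≤ _ := mul_le_mul_of_nonneg_left hsum (by positivity)
  · rw [hAODeq]
    have hsum : ∑ A ∈ F, (1/(A.card:ℝ)) * ∑ x ∈ A, abundance F x
        ≤ (Nsum s m : ℝ) * (2/(m:ℝ) + ((m:ℝ)*s)/k) := by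
      calc ∑ A ∈ F, (1/(A.card:ℝ)) * ∑ x ∈ A, abundance F x
          ≤ ∑ _A ∈ F, (2/(m:ℝ) + ((m:ℝ)*s)/k) := Finset.sum_le_sum htup
      _ = (Nsum s m : ℝ) * (2/(m:ℝ) + ((m:ℝ)*s)/k) := by
            rw [Finset.sum_const, nsmul_eq_mul, hFcard]
    calc (1/(Nsum s m : ℝ)) * ∑ A ∈ F, (1/(A.card:ℝ)) * ∑ x ∈ A, abundance F x
        ≤ (1/(Nsum s m : ℝ)) * ((Nsum s m : ℝ) * (2/(m:ℝ) + ((m:ℝ)*s)/k)) :=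
          mul_le_mul_of_nonneg_left hsum (by positivity)
    _ = 2/(m:ℝ) + ((m:ℝ)*s)/k := by field_simp
    _ = 2/(m:ℝ) + (m:ℝ)^2 * s / ((k*m : ℕ) : ℝ) := by
        push_cast
        field_simp

/-- In the block construction, if `m · 2^{−s} ≤ 1/4`, then
`1/m ≤ AOD(F) ≤ 2/m + m²s/n` (with `n = km`). -/
theorem blockFamily_AOD_bounds
    (k m s : ℕ) (hk : 0 < k) (hm : 2 ≤ m) (hs : 0 < s) (hsk : s + 2 ≤ k)
    (B : Fin m → Finset (Fin (k * m)))
    (hBcard : ∀ i, (B i).card = k)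
    (hBdisj : ∀ i j : Fin m, i ≠ j → Disjoint (B i) (B j))
    (hBcover : (Finset.univ : Finset (Fin m)).biUnion B = (Finset.univ : Finset (Fin (k * m))))
    (T : Fin m → Finset (Fin (k * m)))
    (hT : ∀ i, T i ⊆ B i) (hTcard : ∀ i, (T i).card = s)
    (hτ : (m : ℝ) * (2 : ℝ) ^ (-(s : ℤ)) ≤ 1 / 4) :
    1 / (m : ℝ) ≤ AOD (blockFamily B ((univ : Finset (Fin m)).biUnion T)) ∧
    AOD (blockFamily B ((univ : Finset (Fin m)).biUnion T))
      ≤ 2 / (m : ℝ) + (m : ℝ) ^ 2 * (s : ℝ) / ((k * m : ℕ) : ℝ) :=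
  blockFamily_AOD_bounds' k m s hk hm hs hsk B hBcard hBdisj hBcover T hT hTcard hτ
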